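/- Let Z⁺ be a real L⁺×K matrix, E a K×K matrix, A an m×K matrix, and set Â := fromRows (Z⁺ * Eᵀ) A, an (L⁺⊕m)×K matrix. Suppose Â = P * Z with P isometric (Pᵀ P = 1) and Z an L×K matrix. Then for every real T×K matrix M: ‖M * Zᵀ‖₂ = ‖M * Âᵀ‖₂; moreover ‖M * Aᵀ‖₂ ≤ ‖M * Zᵀ‖₂ and ‖M * E * Z⁺ᵀ‖₂ ≤ ‖M * Zᵀ‖₂. -/

import Mathlib

open Matrix
open scoped Matrix.Norms.L2Operator

private lemma norm_one_le {q : Type*} [Fintype q] [DecidableEq q] :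
    ‖(1 : Matrix q q ℝ)‖ ≤ 1 := by
  rw [Matrix.cstar_norm_def, _root_.map_one]
  exact ContinuousLinearMap.norm_id_le

/-- If `Qᵀ Q = 1` then `‖Q‖ ≤ 1`. -/
private lemma norm_le_one_of_isometric {a b : Type*} [Fintype a] [DecidableEq a]
    [Fintype b] [DecidableEq b] (Q : Matrix a b ℝ) (hQ : Qᵀ * Q = 1) : ‖Q‖ ≤ 1 := by
  have h := Matrix.l2_opNorm_conjTranspose_mul_self Q
  rw [Matrix.conjTranspose_eq_transpose_of_trivial, hQ] at h
  nlinarith [norm_nonneg Q, norm_one_le (q := b), norm_nonneg (1 : Matrix b b ℝ)]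

/-- If `Qᵀ Q = 1` then right multiplication by `Qᵀ` preserves the L2 operator norm. -/
private lemma norm_mul_transpose_isometric {a b T : Type*} [Fintype a] [DecidableEq a]
    [Fintype b] [DecidableEq b] [Fintype T] [DecidableEq T]
    (Q : Matrix a b ℝ) (X : Matrix T b ℝ) (hQ : Qᵀ * Q = 1) : ‖X * Qᵀ‖ = ‖X‖ := by
  have h1 : ‖((X * Qᵀ)ᴴ)ᴴ * (X * Qᵀ)ᴴ‖ = ‖(X * Qᵀ)ᴴ‖ * ‖(X * Qᵀ)ᴴ‖ :=
    Matrix.l2_opNorm_conjTranspose_mul_self _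
  have h2 : ‖(Xᴴ)ᴴ * Xᴴ‖ = ‖Xᴴ‖ * ‖Xᴴ‖ := Matrix.l2_opNorm_conjTranspose_mul_self _
  have key : ((X * Qᵀ)ᴴ)ᴴ * (X * Qᵀ)ᴴ = (Xᴴ)ᴴ * Xᴴ := by
    simp only [Matrix.conjTranspose_eq_transpose_of_trivial, Matrix.transpose_transpose,
      Matrix.transpose_mul, Matrix.transpose_transpose, Matrix.mul_assoc]
    rw [← Matrix.mul_assoc Qᵀ Q Xᵀ, hQ, Matrix.one_mul]
  rw [key, h2, Matrix.l2_opNorm_conjTranspose] at h1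
  have h3 := Matrix.l2_opNorm_conjTranspose (X * Qᵀ)
  nlinarith [norm_nonneg (X * Qᵀ), norm_nonneg X, norm_nonneg Xᴴ]

theorem stmt_12 {Lp m K L T : Type*}
    [Fintype Lp] [DecidableEq Lp] [Fintype m] [DecidableEq m]
    [Fintype K] [DecidableEq K] [Fintype L] [DecidableEq L]
    [Fintype T] [DecidableEq T]
    (Zp : Matrix Lp K ℝ) (E : Matrix K K ℝ) (A : Matrix m K ℝ)
    (P : Matrix (Lp ⊕ m) L ℝ) (Z : Matrix L K ℝ)
    (hP : Pᵀ * P = 1)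
    (hPZ : fromRows (Zp * Eᵀ) A = P * Z) :
    ∀ M : Matrix T K ℝ,
      ‖M * Zᵀ‖ = ‖M * (fromRows (Zp * Eᵀ) A)ᵀ‖ ∧
      ‖M * Aᵀ‖ ≤ ‖M * Zᵀ‖ ∧
      ‖M * E * Zpᵀ‖ ≤ ‖M * Zᵀ‖ := by
  intro M
  have heq : ‖M * Zᵀ‖ = ‖M * (fromRows (Zp * Eᵀ) A)ᵀ‖ := by
    rw [hPZ, Matrix.transpose_mul, ← Matrix.mul_assoc]
    exact (norm_mul_transpose_isometric P (M * Zᵀ) hP).symm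
  refine ⟨heq, ?_, ?_⟩
  · have h : M * (fromRows (Zp * Eᵀ) A)ᵀ * fromRows (0 : Matrix Lp m ℝ) (1 : Matrix m m ℝ)
        = M * Aᵀ := by
      rw [Matrix.transpose_fromRows, Matrix.mul_assoc, Matrix.fromCols_mul_fromRows]
      simp
    have hQ : (fromRows (0 : Matrix Lp m ℝ) (1 : Matrix m m ℝ))ᵀ *
        fromRows (0 : Matrix Lp m ℝ) (1 : Matrix m m ℝ) = 1 := by
      rw [Matrix.transpose_fromRows, Matrix.fromCols_mul_fromRows]
      simp
    calc ‖M * Aᵀ‖ = ‖M * (fromRows (Zp * Eᵀ) A)ᵀ * fromRows (0 : Matrix Lp m ℝ) 1‖ := by rw [h]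
      _ ≤ ‖M * (fromRows (Zp * Eᵀ) A)ᵀ‖ * ‖fromRows (0 : Matrix Lp m ℝ) (1 : Matrix m m ℝ)‖ :=
          Matrix.l2_opNorm_mul _ _
      _ ≤ ‖M * (fromRows (Zp * Eᵀ) A)ᵀ‖ * 1 := by
          exact mul_le_mul_of_nonneg_left (norm_le_one_of_isometric _ hQ) (norm_nonneg _)
      _ = ‖M * Zᵀ‖ := by rw [mul_one, heq]
  · have h : M * (fromRows (Zp * Eᵀ) A)ᵀ * fromRows (1 : Matrix Lp Lp ℝ) (0 : Matrix m Lp ℝ)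
        = M * E * Zpᵀ := by
      rw [Matrix.transpose_fromRows, Matrix.mul_assoc, Matrix.fromCols_mul_fromRows]
      simp [Matrix.transpose_mul, Matrix.mul_assoc]
    have hQ : (fromRows (1 : Matrix Lp Lp ℝ) (0 : Matrix m Lp ℝ))ᵀ *
        fromRows (1 : Matrix Lp Lp ℝ) (0 : Matrix m Lp ℝ) = 1 := by
      rw [Matrix.transpose_fromRows, Matrix.fromCols_mul_fromRows]
      simp
    calc ‖M * E * Zpᵀ‖
        = ‖M * (fromRows (Zp * Eᵀ) A)ᵀ * fromRows (1 : Matrix Lp Lp ℝ) 0‖ := by rw [h]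
      _ ≤ ‖M * (fromRows (Zp * Eᵀ) A)ᵀ‖ * ‖fromRows (1 : Matrix Lp Lp ℝ) (0 : Matrix m Lp ℝ)‖ :=
          Matrix.l2_opNorm_mul _ _
      _ ≤ ‖M * (fromRows (Zp * Eᵀ) A)ᵀ‖ * 1 := by
          exact mul_le_mul_of_nonneg_left (norm_le_one_of_isometric _ hQ) (norm_nonneg _)
      _ = ‖M * Zᵀ‖ := by rw [mul_one, heq]
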